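/- If P ⊆ 2^{<ω₁} has the Cantor tree property, p ∈ P, and dom(p) < α < ω₁, then there exists q ∈ P ∩ 2^α with q extending p. -/

import Mathlib

noncomputable section

/-- The first uncountable ordinal `ω₁`. -/
def omega1 : Ordinal.{0} := (Cardinal.aleph 1).ord

theorem omega1_isLimit : Order.IsSuccLimit omega1 := Cardinal.isSuccLimit_ord (Cardinal.aleph0_le_aleph 1)

/-- An element of `2^{<ω₁}`: a binary sequence of countable ordinal length. -/
def CSeq : Type 1 := Σ α : {o : Ordinal.{0} // o < omega1}, (Set.Iio α.1 → Bool)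

namespace CSeq

def len (p : CSeq) : Ordinal.{0} := p.1.1

theorem len_lt (p : CSeq) : p.len < omega1 := p.1.2

/-- `q` extends `p` (i.e. `q ≤ p` in the tree order `p ≤ q ↔ p ⊇ q`). -/
def Ext (q p : CSeq) : Prop :=
  ∃ h : p.len ≤ q.len, ∀ i : Set.Iio p.len, q.2 ⟨i.1, lt_of_lt_of_le i.2 h⟩ = p.2 i

/-- `p` and `q` are compatible: they have a common extension. -/
def Compat (p q : CSeq) : Prop := ∃ r : CSeq, r.Ext p ∧ r.Ext q

/-- The empty sequence (the root `𝟙` of the tree). -/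
def empty : CSeq :=
  ⟨⟨0, omega1_isLimit.pos⟩, fun i => (not_lt_zero (a := i.1) i.2).elim⟩

/-- The one-bit extension `p⌢b`. -/
def append (p : CSeq) (b : Bool) : CSeq :=
  ⟨⟨Order.succ p.len, omega1_isLimit.succ_lt p.len_lt⟩,
    fun i => if h : i.1 < p.len then p.2 ⟨i.1, h⟩ else b⟩

end CSeq

/-- A Cantor tree of sequences `{p_s : s ∈ 2^{<ω}}`: each `p_{s⌢b}` properly
extends `p_s`, and `p_{s⌢0}`, `p_{s⌢1}` are incompatible. -/
def CantorTreeSeq (ps : List Bool → CSeq) : Prop :=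
  (∀ s : List Bool, ∀ b : Bool,
      (ps (s ++ [b])).Ext (ps s) ∧ (ps s).len < (ps (s ++ [b])).len) ∧
    ∀ s : List Bool, ¬ CSeq.Compat (ps (s ++ [true])) (ps (s ++ [false]))

/-- The finite prefix `f↾n` of a branch `f ∈ 2^ω`. -/
def prefixOf (f : ℕ → Bool) (n : ℕ) : List Bool := List.ofFn (fun i : Fin n => f i)

/-- `P ⊆ 2^{<ω₁}` has the Cantor tree property. The union `⋃_n p_{f↾n}` is
expressed as the least common extension of the `p_{f↾n}`. -/
def CantorTreeProperty (P : Set CSeq) : Prop :=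
  CSeq.empty ∈ P ∧
  (∀ p ∈ P, ∀ q : CSeq, p.Ext q → q ∈ P) ∧
  (∀ p ∈ P, ∀ b : Bool, p.append b ∈ P) ∧
  (∀ ps : List Bool → CSeq, (∀ s, ps s ∈ P) → CantorTreeSeq ps →
    ∃ f : ℕ → Bool, ∃ q ∈ P, (∀ n, q.Ext (ps (prefixOf f n))) ∧
      ∀ r : CSeq, (∀ n, r.Ext (ps (prefixOf f n))) → r.Ext q)

end

noncomputable section

namespace CSeq

theorem ext_refl (p : CSeq) : p.Ext p :=
  ⟨le_refl _, fun _ => rfl⟩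

theorem ext_trans {r q p : CSeq} (h1 : r.Ext q) (h2 : q.Ext p) : r.Ext p := by
  obtain ⟨hl1, hv1⟩ := h1
  obtain ⟨hl2, hv2⟩ := h2
  refine ⟨hl2.trans hl1, fun i => ?_⟩
  have := hv1 ⟨i.1, lt_of_lt_of_le i.2 hl2⟩
  exact this.trans (hv2 i)

theorem len_append (p : CSeq) (b : Bool) : (p.append b).len = Order.succ p.len := rfl

theorem append_ext (p : CSeq) (b : Bool) : (p.append b).Ext p := by
  refine ⟨le_of_lt (Order.lt_succ _), fun i => ?_⟩
  show (if h : i.1 < p.len then p.2 ⟨i.1, h⟩ else b) = p.2 i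
  exact dif_pos i.2

theorem append_val (p : CSeq) (b : Bool) (h : p.len < (p.append b).len) :
    (p.append b).2 ⟨p.len, h⟩ = b := by
  show (if h : p.len < p.len then p.2 ⟨p.len, h⟩ else b) = b
  exact dif_neg (lt_irrefl _)

/-- Restriction of `q` to length `β`. -/
def restrict (q : CSeq) (β : Ordinal.{0}) (hβ : β < omega1) (h : β ≤ q.len) : CSeq :=
  ⟨⟨β, hβ⟩, fun i => q.2 ⟨i.1, lt_of_lt_of_le i.2 h⟩⟩

theorem restrict_len (q : CSeq) (β : Ordinal.{0}) (hβ : β < omega1) (h : β ≤ q.len) :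
    (q.restrict β hβ h).len = β := rfl

theorem restrict_ext {q r : CSeq} (β : Ordinal.{0}) (hβ : β < omega1) (h : β ≤ q.len)
    (hqr : q.Ext r) (hrβ : r.len ≤ β) : (q.restrict β hβ h).Ext r := by
  obtain ⟨hl, hv⟩ := hqr
  exact ⟨hrβ, fun i => hv i⟩

end CSeq

/-- Key lemma: every element of `P` can be extended within `P` to any countable
length `α ≥` its own length. -/
theorem cseq_extend (P : Set CSeq) (hP : CantorTreeProperty P) :
    ∀ α : Ordinal.{0}, α < omega1 → ∀ p ∈ P, p.len ≤ α →
      ∃ q ∈ P, q.len = α ∧ q.Ext p := by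
  intro α
  induction α using Ordinal.limitRecOn with
  | zero =>
    intro _ p hp hle
    exact ⟨p, hp, nonpos_iff_eq_zero.mp hle, p.ext_refl⟩
  | add_one β ih =>
    rw [Ordinal.add_one_eq_succ]
    intro hβω p hp hle
    rcases eq_or_lt_of_le hle with heq | hlt
    · exact ⟨p, hp, heq, p.ext_refl⟩
    · obtain ⟨q, hq, hqlen, hqext⟩ := ih ((Order.lt_succ β).trans hβω) p hp
        ((Order.lt_succ_iff).mp hlt)
      refine ⟨q.append true, hP.2.2.1 q hq true, ?_, CSeq.ext_trans (q.append_ext true) hqext⟩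
      rw [CSeq.len_append, hqlen]
  | limit α hαlim ih =>
    intro hαω p hp hle
    rcases eq_or_lt_of_le hle with heq | hpα
    · exact ⟨p, hp, heq, p.ext_refl⟩
    -- `α` is a countable limit ordinal; get a surjection onto `Iio α`.
    have hcnt : Countable (Set.Iio α) := by
      rw [← Cardinal.mk_le_aleph0_iff, Ordinal.mk_Iio_ordinal, ← Cardinal.lift_aleph0.{1,0},
        Cardinal.lift_le]
      have := Cardinal.lt_ord.mp hαω
      rwa [← Cardinal.succ_aleph0, Order.lt_succ_iff] at this
    have hne : Nonempty (Set.Iio α) := ⟨⟨0, hαlim.pos⟩⟩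
    obtain ⟨e, he⟩ := exists_surjective_nat (Set.Iio α)
    -- a strictly increasing cofinal `ω`-sequence in `α` above `p.len`
    set g : ℕ → Ordinal.{0} :=
      fun n => Nat.rec (p.len + 1) (fun n ih => max ih (e n).1 + 1) n with hg
    have hgα : ∀ n, g n < α := by
      intro n
      induction n with
      | zero =>
        show p.len + 1 < α
        rw [Ordinal.add_one_eq_succ]; exact hαlim.succ_lt hpα
      | succ n ihn =>
        show max (g n) (e n).1 + 1 < α
        rw [Ordinal.add_one_eq_succ]
        exact hαlim.succ_lt (max_lt ihn (e n).2)
    have hgω : ∀ n, g n < omega1 := fun n => (hgα n).trans hαω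
    have hgmono : ∀ n, g n < g (n + 1) := by
      intro n
      show g n < max (g n) (e n).1 + 1
      rw [Ordinal.add_one_eq_succ]
      exact lt_of_le_of_lt (le_max_left _ _) (Order.lt_succ _)
    have hg0 : p.len < g 0 := by
      show p.len < p.len + 1
      rw [Ordinal.add_one_eq_succ]; exact Order.lt_succ _
    have hge : ∀ n, (e n).1 < g (n + 1) := by
      intro n
      show (e n).1 < max (g n) (e n).1 + 1
      rw [Ordinal.add_one_eq_succ]
      exact lt_of_le_of_lt (le_max_right _ _) (Order.lt_succ _)
    -- extension within `P` to each length `g n`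
    have hExt : ∀ c : CSeq, c ∈ P → ∀ n : ℕ, c.len ≤ g n →
        ∃ q : CSeq, q ∈ P ∧ q.len = g n ∧ q.Ext c := by
      intro c hc n hcn
      obtain ⟨q, hq, h⟩ := ih (g n) (hgα n) (hgω n) c hc hcn
      exact ⟨q, hq, h⟩
    -- build the Cantor tree (indexed by reversed lists)
    let G : ∀ t : List Bool, {c : CSeq // c ∈ P ∧ c.len = g t.length ∧ c.Ext p} := by
      intro t
      induction t with
      | nil =>
        refine ⟨Classical.choose (hExt p hp 0 hg0.le), ?_⟩
        obtain ⟨h1, h2, h3⟩ := Classical.choose_spec (hExt p hp 0 hg0.le)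
        exact ⟨h1, h2, h3⟩
      | cons b t ihG =>
        refine ⟨Classical.choose (hExt (ihG.1.append b) (hP.2.2.1 _ ihG.2.1 b) (t.length + 1)
          (by rw [CSeq.len_append, ihG.2.2.1, Order.succ_le_iff]; exact hgmono t.length)), ?_⟩
        obtain ⟨h1, h2, h3⟩ := Classical.choose_spec (hExt (ihG.1.append b)
          (hP.2.2.1 _ ihG.2.1 b) (t.length + 1)
          (by rw [CSeq.len_append, ihG.2.2.1, Order.succ_le_iff]; exact hgmono t.length))
        exact ⟨h1, h2, CSeq.ext_trans h3 (CSeq.ext_trans (ihG.1.append_ext b) ihG.2.2.2)⟩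
    have hstep : ∀ (t : List Bool) (b : Bool), (G (b :: t)).1.Ext ((G t).1.append b) := by
      intro t b
      have hmem : (G t).1.append b ∈ P := hP.2.2.1 _ (G t).2.1 b
      have hlen : ((G t).1.append b).len ≤ g (t.length + 1) := by
        rw [CSeq.len_append, (G t).2.2.1, Order.succ_le_iff]
        exact hgmono t.length
      exact (Classical.choose_spec (hExt ((G t).1.append b) hmem (t.length + 1) hlen)).2.2
    set ps : List Bool → CSeq := fun s => (G s.reverse).1 with hps
    have hpsP : ∀ s, ps s ∈ P := fun s => (G s.reverse).2.1
    have hpslen : ∀ s, (ps s).len = g s.length := by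
      intro s
      calc (ps s).len = g s.reverse.length := (G s.reverse).2.2.1
        _ = g s.length := congrArg g List.length_reverse
    have hpsp : ∀ s, (ps s).Ext p := fun s => (G s.reverse).2.2.2
    have hrev : ∀ (s : List Bool) (b : Bool), ps (s ++ [b]) = (G (b :: s.reverse)).1 := by
      intro s b
      have hl : (s ++ [b]).reverse = b :: s.reverse := by
        rw [List.reverse_append, List.reverse_singleton, List.singleton_append]
      exact congrArg (fun t => (G t).1) hl
    have hstep' : ∀ (s : List Bool) (b : Bool), (ps (s ++ [b])).Ext ((ps s).append b) := by
      intro s b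
      rw [hrev]
      exact hstep s.reverse b
    have htree : CantorTreeSeq ps := by
      constructor
      · intro s b
        refine ⟨CSeq.ext_trans (hstep' s b) (CSeq.append_ext _ b), ?_⟩
        rw [hpslen, hpslen, List.length_append, List.length_singleton]
        exact hgmono s.length
      · rintro s ⟨r, hrt, hrf⟩
        have ra : r.Ext ((ps s).append true) := CSeq.ext_trans hrt (hstep' s true)
        have rb : r.Ext ((ps s).append false) := CSeq.ext_trans hrf (hstep' s false)
        obtain ⟨hlt, hvt⟩ := ra
        obtain ⟨hlf, hvf⟩ := rb
        have hi : (ps s).len ∈ Set.Iio ((ps s).append true).len := by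
          show (ps s).len < ((ps s).append true).len
          rw [CSeq.len_append]; exact Order.lt_succ _
        have hi' : (ps s).len ∈ Set.Iio ((ps s).append false).len := by
          show (ps s).len < ((ps s).append false).len
          rw [CSeq.len_append]; exact Order.lt_succ _
        have e1 := hvt ⟨(ps s).len, hi⟩
        have e2 := hvf ⟨(ps s).len, hi'⟩
        replace e1 := e1.trans (CSeq.append_val _ _ hi)
        replace e2 := e2.trans (CSeq.append_val _ _ hi')
        exact Bool.noConfusion (e1.symm.trans e2)
    obtain ⟨f, q, hqP, hq, hmin⟩ := hP.2.2.2 ps hpsP htree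
    have hplen : ∀ n, (ps (prefixOf f n)).len = g n := by
      intro n
      rw [hpslen]
      congr 1
      exact List.length_ofFn
    have hglen : ∀ n, g n ≤ q.len := by
      intro n
      obtain ⟨h, _⟩ := hq n
      rwa [hplen] at h
    have hαq : α ≤ q.len := by
      refine le_of_forall_lt fun β hβ => ?_
      obtain ⟨n, hn⟩ := he ⟨β, hβ⟩
      have hβg : β < g (n + 1) := by
        have := hge n
        rwa [hn] at this
      exact lt_of_lt_of_le hβg (hglen (n + 1))
    have hrn : ∀ n, (q.restrict α hαω hαq).Ext (ps (prefixOf f n)) := by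
      intro n
      refine CSeq.restrict_ext α hαω hαq (hq n) ?_
      rw [hplen]
      exact (hgα n).le
    obtain ⟨hqr, _⟩ := hmin (q.restrict α hαω hαq) hrn
    exact ⟨q, hqP, le_antisymm hqr hαq, CSeq.ext_trans (hq 0) (hpsp (prefixOf f 0))⟩

theorem stmt17 (P : Set CSeq) (hP : CantorTreeProperty P)
    (p : CSeq) (hp : p ∈ P) (α : Ordinal) (h1 : p.len < α) (h2 : α < omega1) :
    ∃ q ∈ P, q.len = α ∧ q.Ext p :=
  cseq_extend P hP α h2 p hp h1.le

end
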